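/- Under the assumptions of the mean-field theorem (finite measure r, moment condition ∫ κ dr < ∞), any two solutions (μ_t), (ν_t) of the mean-field equation dμ_t/dt = |r| (T(μ_t) - μ_t) satisfy ‖μ_t - ν_t‖ ≤ e^{Lt} ‖μ_0 - ν_0‖ for all t ≥ 0, where L = ∫ r(dω)(κ(ω) + 1). In particular, solutions to the mean-field equation are unique given the initial state. -/

import Mathlib

open MeasureTheory

/-- The total variation distance `‖μ - ν‖ = sup_A |μ(A) - ν(A)|`. -/
noncomputable def tvDist {S : Type*} [MeasurableSpace S] (μ ν : Measure S) : ℝ :=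
  sSup {c | ∃ A : Set S, MeasurableSet A ∧ c = |(μ A).toReal - (ν A).toReal|}

/-- The RDE operator: law of `γ[ω](X_1, X_2, …)` with `ω ~ |r|⁻¹ r` and `X_i` i.i.d. `μ`. -/
noncomputable def rdeT {Ω S : Type*} [MeasurableSpace Ω] [MeasurableSpace S] [Nonempty S]
    (r : Measure Ω) (γ : Ω → (ℕ → S) → S) (κ : Ω → ℕ) (μ : Measure S) : Measure S :=
  ((r Set.univ)⁻¹ • r).bind fun ω =>
    Measure.map
      (fun v : Fin (κ ω) → S =>
        γ ω (fun i => if h : i < κ ω then v ⟨i, h⟩ else Classical.arbitrary S))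
      (Measure.pi fun _ : Fin (κ ω) => μ)

/-- A family `(μ_t)_{t ≥ 0}` of probability measures solves the mean-field equation
`dμ_t/dt = |r| (T(μ_t) - μ_t)`, interpreted weakly against bounded measurable functions. -/
def SolvesMeanField {Ω S : Type*} [MeasurableSpace Ω] [MeasurableSpace S] [Nonempty S]
    (r : Measure Ω) (γ : Ω → (ℕ → S) → S) (κ : Ω → ℕ) (μ : ℝ → Measure S) : Prop :=
  (∀ t : ℝ, 0 ≤ t → IsProbabilityMeasure (μ t)) ∧
  ∀ φ : S → ℝ, Measurable φ → (∃ C, ∀ x, |φ x| ≤ C) →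
    ∀ t : ℝ, 0 ≤ t →
      HasDerivAt (fun s => ∫ x, φ x ∂(μ s))
        ((r Set.univ).toReal *
          ((∫ x, φ x ∂(rdeT r γ κ (μ t))) - ∫ x, φ x ∂(μ t))) t

namespace Stmt5Aux

open Set
open scoped ENNReal

variable {S : Type*} [MeasurableSpace S]

lemma tv_mem_zero (μ ν : Measure S) :
    (0:ℝ) ∈ {c | ∃ A : Set S, MeasurableSet A ∧ c = |(μ A).toReal - (ν A).toReal|} :=
  ⟨∅, MeasurableSet.empty, by simp⟩

lemma tv_bdd (μ ν : Measure S) [IsFiniteMeasure μ] [IsFiniteMeasure ν] :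
    BddAbove {c | ∃ A : Set S, MeasurableSet A ∧ c = |(μ A).toReal - (ν A).toReal|} := by
  refine ⟨(μ univ).toReal + (ν univ).toReal, ?_⟩
  rintro c ⟨A, hA, rfl⟩
  have h1 : (μ A).toReal ≤ (μ univ).toReal :=
    ENNReal.toReal_mono (measure_ne_top _ _) (measure_mono (subset_univ A))
  have h2 : (ν A).toReal ≤ (ν univ).toReal :=
    ENNReal.toReal_mono (measure_ne_top _ _) (measure_mono (subset_univ A))
  have h3 : (0:ℝ) ≤ (μ A).toReal := ENNReal.toReal_nonneg
  have h4 : (0:ℝ) ≤ (ν A).toReal := ENNReal.toReal_nonneg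
  rw [abs_sub_le_iff]; constructor <;> linarith

lemma le_tv (μ ν : Measure S) [IsFiniteMeasure μ] [IsFiniteMeasure ν]
    {A : Set S} (hA : MeasurableSet A) :
    |(μ A).toReal - (ν A).toReal| ≤ tvDist μ ν :=
  le_csSup (tv_bdd μ ν) ⟨A, hA, rfl⟩

lemma tv_nonneg (μ ν : Measure S) [IsFiniteMeasure μ] [IsFiniteMeasure ν] :
    0 ≤ tvDist μ ν :=
  le_csSup (tv_bdd μ ν) (tv_mem_zero μ ν)

lemma tv_le (μ ν : Measure S) {C : ℝ}
    (h : ∀ A : Set S, MeasurableSet A → |(μ A).toReal - (ν A).toReal| ≤ C) :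
    tvDist μ ν ≤ C :=
  csSup_le ⟨0, tv_mem_zero μ ν⟩ (by rintro c ⟨A, hA, rfl⟩; exact h A hA)

lemma integrable_of_bound {α : Type*} [MeasurableSpace α] (m : Measure α) [IsFiniteMeasure m]
    {f : α → ℝ} (hf : AEStronglyMeasurable f m) (C : ℝ) (h : ∀ x, |f x| ≤ C) :
    Integrable f m :=
  Integrable.mono' (integrable_const C) hf (Filter.Eventually.of_forall h)

lemma prod_tv_le {α β : Type*} [MeasurableSpace α] [MeasurableSpace β]
    (μ ν : Measure α) (P Q : Measure β)
    [IsProbabilityMeasure μ] [IsProbabilityMeasure ν]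
    [IsProbabilityMeasure P] [IsProbabilityMeasure Q]
    (d e : ℝ)
    (hμν : ∀ A : Set α, MeasurableSet A → |(μ A).toReal - (ν A).toReal| ≤ d)
    (hPQ : ∀ B : Set β, MeasurableSet B → |(P B).toReal - (Q B).toReal| ≤ e)
    {C : Set (α × β)} (hC : MeasurableSet C) :
    |((μ.prod P) C).toReal - ((ν.prod Q) C).toReal| ≤ d + e := by
  have hle1 : ∀ (m : Measure β) [IsProbabilityMeasure m] (B : Set β), (m B).toReal ≤ 1 :=
    fun m _ B => by
      simpa using ENNReal.toReal_mono (by simp) (prob_le_one (μ := m) (s := B))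
  have hle1' : ∀ (m : Measure α) [IsProbabilityMeasure m] (B : Set α), (m B).toReal ≤ 1 :=
    fun m _ B => by
      simpa using ENNReal.toReal_mono (by simp) (prob_le_one (μ := m) (s := B))
  have key1 : ∀ (R : Measure β) [IsProbabilityMeasure R],
      ((μ.prod R) C).toReal = ∫ x, (R (Prod.mk x ⁻¹' C)).toReal ∂μ := by
    intro R _
    rw [Measure.prod_apply hC,
      ← integral_toReal (measurable_measure_prodMk_left hC).aemeasurable
        (Filter.Eventually.of_forall fun x => measure_lt_top R _)]
  have key2 : ∀ (R : Measure α) [IsProbabilityMeasure R],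
      ((R.prod Q) C).toReal = ∫ y, (R ((fun x => (x, y)) ⁻¹' C)).toReal ∂Q := by
    intro R _
    rw [Measure.prod_apply_symm hC,
      ← integral_toReal (measurable_measure_prodMk_right hC).aemeasurable
        (Filter.Eventually.of_forall fun y => measure_lt_top R _)]
  have int1 : ∀ (R : Measure β) [IsProbabilityMeasure R],
      Integrable (fun x => (R (Prod.mk x ⁻¹' C)).toReal) μ := fun R _ =>
    integrable_of_bound μ
      ((measurable_measure_prodMk_left hC).ennreal_toReal).aestronglyMeasurable 1
      (fun x => by rw [abs_of_nonneg ENNReal.toReal_nonneg]; exact hle1 R _)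
  have int2 : ∀ (R : Measure α) [IsProbabilityMeasure R],
      Integrable (fun y => (R ((fun x => (x, y)) ⁻¹' C)).toReal) Q := fun R _ =>
    integrable_of_bound Q
      ((measurable_measure_prodMk_right hC).ennreal_toReal).aestronglyMeasurable 1
      (fun y => by rw [abs_of_nonneg ENNReal.toReal_nonneg]; exact hle1' R _)
  have t1 : |((μ.prod P) C).toReal - ((μ.prod Q) C).toReal| ≤ e := by
    rw [key1 P, key1 Q, ← integral_sub (int1 P) (int1 Q)]
    calc |∫ x, ((P (Prod.mk x ⁻¹' C)).toReal - (Q (Prod.mk x ⁻¹' C)).toReal) ∂μ|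
        ≤ ∫ x, |(P (Prod.mk x ⁻¹' C)).toReal - (Q (Prod.mk x ⁻¹' C)).toReal| ∂μ := by
          simpa [Real.norm_eq_abs] using
            norm_integral_le_integral_norm
              (fun x => (P (Prod.mk x ⁻¹' C)).toReal - (Q (Prod.mk x ⁻¹' C)).toReal) (μ := μ)
      _ ≤ ∫ _x, e ∂μ := by
          refine integral_mono ((int1 P).sub (int1 Q)).abs (integrable_const e) fun x => ?_
          exact hPQ _ (measurable_prodMk_left hC)
      _ = e := by simp
  have t2 : |((μ.prod Q) C).toReal - ((ν.prod Q) C).toReal| ≤ d := by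
    rw [key2 μ, key2 ν, ← integral_sub (int2 μ) (int2 ν)]
    calc |∫ y, ((μ ((fun x => (x, y)) ⁻¹' C)).toReal - (ν ((fun x => (x, y)) ⁻¹' C)).toReal) ∂Q|
        ≤ ∫ y, |(μ ((fun x => (x, y)) ⁻¹' C)).toReal
            - (ν ((fun x => (x, y)) ⁻¹' C)).toReal| ∂Q := by
          simpa [Real.norm_eq_abs] using
            norm_integral_le_integral_norm
              (fun y => (μ ((fun x => (x, y)) ⁻¹' C)).toReal
                - (ν ((fun x => (x, y)) ⁻¹' C)).toReal) (μ := Q)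
      _ ≤ ∫ _y, d ∂Q := by
          refine integral_mono ((int2 μ).sub (int2 ν)).abs (integrable_const d) fun y => ?_
          exact hμν _ (hC.preimage measurable_prodMk_right)
      _ = d := by simp
  calc |((μ.prod P) C).toReal - ((ν.prod Q) C).toReal|
      ≤ |((μ.prod P) C).toReal - ((μ.prod Q) C).toReal|
        + |((μ.prod Q) C).toReal - ((ν.prod Q) C).toReal| := abs_sub_le _ _ _
    _ ≤ e + d := add_le_add t1 t2
    _ = d + e := add_comm _ _

lemma pi_tv_le (μ ν : Measure S) [IsProbabilityMeasure μ] [IsProbabilityMeasure ν] (d : ℝ)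
    (h : ∀ A : Set S, MeasurableSet A → |(μ A).toReal - (ν A).toReal| ≤ d) :
    ∀ (n : ℕ) (B : Set (Fin n → S)), MeasurableSet B →
      |((Measure.pi fun _ : Fin n => μ) B).toReal
        - ((Measure.pi fun _ : Fin n => ν) B).toReal| ≤ n * d := by
  intro n
  induction n with
  | zero =>
    intro B _hB
    rcases B.eq_empty_or_nonempty with rfl | hne
    · simp
    · have hB : B = univ := hne.eq_univ
      subst hB
      simp
  | succ n ih =>
    intro B hB
    set e := MeasurableEquiv.piFinSuccAbove (fun _ : Fin (n + 1) => S) 0 with he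
    have hpres : ∀ (m : Measure S) [IsProbabilityMeasure m],
        MeasurePreserving e (Measure.pi fun _ : Fin (n+1) => m)
          (m.prod (Measure.pi fun _ : Fin n => m)) := fun m _ =>
      measurePreserving_piFinSuccAbove (fun _ : Fin (n+1) => m) 0
    have hCm : MeasurableSet (e.symm ⁻¹' B) := e.symm.measurable hB
    have hval : ∀ (m : Measure S) [IsProbabilityMeasure m],
        (Measure.pi fun _ : Fin (n+1) => m) B
          = (m.prod (Measure.pi fun _ : Fin n => m)) (e.symm ⁻¹' B) := by
      intro m _
      rw [← (hpres m).map_eq, Measure.map_apply e.measurable hCm]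
      congr 1
      ext x
      simp
    rw [hval μ, hval ν]
    have := prod_tv_le μ ν (Measure.pi fun _ : Fin n => μ) (Measure.pi fun _ : Fin n => ν)
      d (n * d) h (fun B hB => ih B hB) hCm
    calc |((μ.prod (Measure.pi fun _ : Fin n => μ)) (e.symm ⁻¹' B)).toReal
          - ((ν.prod (Measure.pi fun _ : Fin n => ν)) (e.symm ⁻¹' B)).toReal|
        ≤ d + n * d := this
      _ = (n + 1 : ℕ) * d := by push_cast; ring

variable {Ω : Type*} [MeasurableSpace Ω] [Nonempty S]
variable (γ : Ω → (ℕ → S) → S) (κ : Ω → ℕ)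

noncomputable def extFin (n : ℕ) (v : Fin n → S) : ℕ → S :=
  fun i => if h : i < n then v ⟨i, h⟩ else Classical.arbitrary S

lemma measurable_extFin (n : ℕ) : Measurable (extFin (S := S) n) := by
  apply measurable_pi_lambda
  intro i
  by_cases h : i < n
  · simpa [extFin, h] using measurable_pi_apply (⟨i, h⟩ : Fin n)
  · simp [extFin, h]

noncomputable def Hfun (μ' : Measure S) (A : Set S) (ω : Ω) : ℝ≥0∞ :=
  Measure.pi (fun _ : Fin (κ ω) => μ')
    ((fun v : Fin (κ ω) → S => γ ω (extFin (κ ω) v)) ⁻¹' A)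

variable {γ κ}

lemma measurable_gamma_ext (hγ : Measurable (Function.uncurry γ)) (ω : Ω) :
    Measurable fun v : Fin (κ ω) → S => γ ω (extFin (κ ω) v) :=
  (hγ.of_uncurry_left).comp (measurable_extFin (κ ω))

lemma measurable_Hfun (hγ : Measurable (Function.uncurry γ)) (hκ : Measurable κ)
    (μ' : Measure S) [SigmaFinite μ'] {A : Set S} (hA : MeasurableSet A) :
    Measurable (Hfun γ κ μ' A) := by
  classical
  set h : ℕ → Ω → ℝ≥0∞ := fun n ω =>
    Measure.pi (fun _ : Fin n => μ')
      ((fun v : Fin n → S => γ ω (extFin n v)) ⁻¹' A) with hh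
  have hhn : ∀ n, Measurable (h n) := by
    intro n
    have hset : MeasurableSet {p : Ω × (Fin n → S) | γ p.1 (extFin n p.2) ∈ A} := by
      have hm : Measurable fun p : Ω × (Fin n → S) => γ p.1 (extFin n p.2) :=
        hγ.comp (measurable_fst.prodMk ((measurable_extFin n).comp measurable_snd))
      exact hm hA
    have := measurable_measure_prodMk_left (ν := Measure.pi (fun _ : Fin n => μ')) hset
    convert this using 2 <;> rfl
  have heq : Hfun γ κ μ' A = fun ω => ∑' n, if κ ω = n then h n ω else 0 := by
    funext ω
    rw [tsum_eq_single (κ ω) (fun n hn => if_neg (fun hc => hn hc.symm))]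
    simp [Hfun, hh]
  rw [heq]
  exact Measurable.ennreal_tsum fun n =>
    Measurable.ite (hκ (measurableSet_singleton n)) (hhn n) measurable_const

lemma rdeT_apply (r : Measure Ω) (hγ : Measurable (Function.uncurry γ)) (hκ : Measurable κ)
    (μ' : Measure S) [SigmaFinite μ'] {A : Set S} (hA : MeasurableSet A) :
    rdeT r γ κ μ' A = (r Set.univ)⁻¹ * ∫⁻ ω, Hfun γ κ μ' A ω ∂r := by
  have hker : Measurable fun ω =>
      Measure.map (fun v : Fin (κ ω) → S => γ ω (extFin (κ ω) v))
        (Measure.pi fun _ : Fin (κ ω) => μ') := by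
    apply Measure.measurable_of_measurable_coe
    intro B hB
    have : (fun ω => Measure.map (fun v : Fin (κ ω) → S => γ ω (extFin (κ ω) v))
        (Measure.pi fun _ : Fin (κ ω) => μ') B) = Hfun γ κ μ' B := by
      funext ω
      rw [Measure.map_apply (measurable_gamma_ext hγ ω) hB]
      rfl
    rw [this]
    exact measurable_Hfun hγ hκ μ' hB
  have : rdeT r γ κ μ' A
      = ∫⁻ ω, Measure.map (fun v : Fin (κ ω) → S => γ ω (extFin (κ ω) v))
          (Measure.pi fun _ : Fin (κ ω) => μ') A ∂((r Set.univ)⁻¹ • r) := by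
    rw [rdeT]
    exact Measure.bind_apply hA hker.aemeasurable
  rw [this, lintegral_smul_measure]
  congr 1
  apply lintegral_congr
  intro ω
  rw [Measure.map_apply (measurable_gamma_ext hγ ω) hA]
  rfl

lemma Hfun_le_one (μ' : Measure S) [IsProbabilityMeasure μ'] (A : Set S) (ω : Ω) :
    Hfun γ κ μ' A ω ≤ 1 :=
  prob_le_one

lemma rdeT_toReal_le_one (r : Measure Ω) [IsFiniteMeasure r] (hr : r Set.univ ≠ 0)
    (hγ : Measurable (Function.uncurry γ)) (hκ : Measurable κ)
    (μ' : Measure S) [IsProbabilityMeasure μ'] {A : Set S} (hA : MeasurableSet A) :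
    (rdeT r γ κ μ' A).toReal ≤ 1 := by
  rw [rdeT_apply r hγ hκ μ' hA]
  have h1 : ∫⁻ ω, Hfun γ κ μ' A ω ∂r ≤ r Set.univ := by
    calc ∫⁻ ω, Hfun γ κ μ' A ω ∂r ≤ ∫⁻ _ω, 1 ∂r :=
          lintegral_mono fun ω => Hfun_le_one μ' A ω
      _ = r Set.univ := by simp
  have h2 : (r Set.univ)⁻¹ * ∫⁻ ω, Hfun γ κ μ' A ω ∂r ≤ 1 := by
    calc (r Set.univ)⁻¹ * ∫⁻ ω, Hfun γ κ μ' A ω ∂r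
        ≤ (r Set.univ)⁻¹ * r Set.univ := by gcongr
      _ = 1 := ENNReal.inv_mul_cancel hr (measure_ne_top r _)
  calc ((r Set.univ)⁻¹ * ∫⁻ ω, Hfun γ κ μ' A ω ∂r).toReal
      ≤ (1 : ℝ≥0∞).toReal := ENNReal.toReal_mono (by simp) h2
    _ = 1 := by simp

lemma rdeT_lip (r : Measure Ω) [IsFiniteMeasure r] (hr : r Set.univ ≠ 0)
    (hγ : Measurable (Function.uncurry γ)) (hκ : Measurable κ)
    (hmom : Integrable (fun ω => (κ ω : ℝ)) r)
    (μ' ν' : Measure S) [IsProbabilityMeasure μ'] [IsProbabilityMeasure ν']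
    {A : Set S} (hA : MeasurableSet A) :
    |(rdeT r γ κ μ' A).toReal - (rdeT r γ κ ν' A).toReal|
      ≤ (r Set.univ).toReal⁻¹ * ((∫ ω, (κ ω : ℝ) ∂r) * tvDist μ' ν') := by
  have hinv : ((r Set.univ)⁻¹).toReal = (r Set.univ).toReal⁻¹ := ENNReal.toReal_inv _
  have hval : ∀ (m : Measure S) [IsProbabilityMeasure m],
      (rdeT r γ κ m A).toReal
        = (r Set.univ).toReal⁻¹ * ∫ ω, (Hfun γ κ m A ω).toReal ∂r := by
    intro m _
    rw [rdeT_apply r hγ hκ m hA, ENNReal.toReal_mul, hinv,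
      ← integral_toReal (measurable_Hfun hγ hκ m hA).aemeasurable
        (Filter.Eventually.of_forall fun ω =>
          lt_of_le_of_lt (Hfun_le_one m A ω) ENNReal.one_lt_top)]
  rw [hval μ', hval ν', ← mul_sub]
  rw [abs_mul, abs_of_nonneg (inv_nonneg.2 ENNReal.toReal_nonneg)]
  refine mul_le_mul_of_nonneg_left ?_ (inv_nonneg.2 ENNReal.toReal_nonneg)
  have hint : ∀ (m : Measure S) [IsProbabilityMeasure m],
      Integrable (fun ω => (Hfun γ κ m A ω).toReal) r := by
    intro m _
    refine integrable_of_bound r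
      ((measurable_Hfun hγ hκ m hA).ennreal_toReal).aestronglyMeasurable 1 fun ω => ?_
    rw [abs_of_nonneg ENNReal.toReal_nonneg]
    simpa using ENNReal.toReal_mono (by simp) (Hfun_le_one m A ω)
  have hpt : ∀ ω, |(Hfun γ κ μ' A ω).toReal - (Hfun γ κ ν' A ω).toReal|
      ≤ (κ ω : ℝ) * tvDist μ' ν' := by
    intro ω
    exact pi_tv_le μ' ν' (tvDist μ' ν') (fun B hB => le_tv μ' ν' hB) (κ ω)
      _ ((measurable_gamma_ext hγ ω) hA)
  rw [← integral_sub (hint μ') (hint ν')]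
  calc |∫ ω, ((Hfun γ κ μ' A ω).toReal - (Hfun γ κ ν' A ω).toReal) ∂r|
      ≤ ∫ ω, |(Hfun γ κ μ' A ω).toReal - (Hfun γ κ ν' A ω).toReal| ∂r := by
        simpa [Real.norm_eq_abs] using norm_integral_le_integral_norm
          (fun ω => (Hfun γ κ μ' A ω).toReal - (Hfun γ κ ν' A ω).toReal) (μ := r)
    _ ≤ ∫ ω, (κ ω : ℝ) * tvDist μ' ν' ∂r := by
        exact integral_mono (((hint μ').sub (hint ν')).abs) (hmom.mul_const _) hpt
    _ = (∫ ω, (κ ω : ℝ) ∂r) * tvDist μ' ν' := integral_mul_const _ _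

end Stmt5Aux
open Set Stmt5Aux in
/-- Uniqueness/Gronwall estimate for the mean-field equation: any two solutions satisfy
`‖μ_t - ν_t‖ ≤ e^{Lt} ‖μ_0 - ν_0‖` with `L = ∫ (κ(ω)+1) r(dω)`; in particular solutions
are unique given the initial state. -/
theorem stmt5 {Ω S : Type*} [MeasurableSpace Ω] [MeasurableSpace S] [Nonempty S]
    (r : Measure Ω) [IsFiniteMeasure r] (hr : r Set.univ ≠ 0)
    (γ : Ω → (ℕ → S) → S) (hγ : Measurable (Function.uncurry γ))
    (κ : Ω → ℕ) (hκ : Measurable κ)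
    (hdep : ∀ ω, ∀ x y : ℕ → S, (∀ i < κ ω, x i = y i) → γ ω x = γ ω y)
    (hmom : Integrable (fun ω => (κ ω : ℝ)) r)
    (μ ν : ℝ → Measure S)
    (hμ : SolvesMeanField r γ κ μ) (hν : SolvesMeanField r γ κ ν) :
    (∀ t : ℝ, 0 ≤ t →
      tvDist (μ t) (ν t) ≤
        Real.exp ((∫ ω, ((κ ω : ℝ) + 1) ∂r) * t) * tvDist (μ 0) (ν 0)) ∧
    (μ 0 = ν 0 → ∀ t : ℝ, 0 ≤ t → μ t = ν t) := by
  classical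
  obtain ⟨hμP, hμD⟩ := hμ
  obtain ⟨hνP, hνD⟩ := hν
  set L : ℝ := ∫ ω, ((κ ω : ℝ) + 1) ∂r with hLdef
  set K : ℝ := ∫ ω, (κ ω : ℝ) ∂r with hKdef
  set R : ℝ := (r Set.univ).toReal with hRdef
  have hrtop : r Set.univ ≠ ⊤ := measure_ne_top r _
  have hRpos : 0 < R := ENNReal.toReal_pos hr hrtop
  have hK0 : 0 ≤ K := integral_nonneg fun ω => Nat.cast_nonneg _
  have hL : L = K + R := by
    rw [hLdef, integral_add hmom (integrable_const 1), integral_const, smul_eq_mul, mul_one,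
      hKdef, hRdef, measureReal_def]
  have hL0 : 0 ≤ L := by rw [hL]; linarith
  -- indicator test functions
  set φ : Set S → S → ℝ := fun A => A.indicator fun _ => (1:ℝ) with hφdef
  have hφm : ∀ A : Set S, MeasurableSet A → Measurable (φ A) := fun A hA =>
    measurable_const.indicator hA
  have hφb : ∀ (A : Set S) (x : S), |φ A x| ≤ 1 := fun A x => by
    by_cases h : x ∈ A <;> simp [hφdef, Set.indicator_apply, h]
  have hφint : ∀ (m : Measure S) (A : Set S), MeasurableSet A →
      ∫ x, φ A x ∂m = (m A).toReal := fun m A hA => by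
    rw [hφdef]
    simp [integral_indicator_const (1:ℝ) hA]; rfl
  set F : Set S → ℝ → ℝ := fun A t => (∫ x, φ A x ∂(μ t)) - ∫ x, φ A x ∂(ν t) with hFdef
  set D : Set S → ℝ → ℝ := fun A t =>
    R * ((∫ x, φ A x ∂(rdeT r γ κ (μ t))) - ∫ x, φ A x ∂(μ t))
      - R * ((∫ x, φ A x ∂(rdeT r γ κ (ν t))) - ∫ x, φ A x ∂(ν t)) with hDdef
  have hFd : ∀ (A : Set S), MeasurableSet A → ∀ t : ℝ, 0 ≤ t →
      HasDerivAt (F A) (D A t) t := fun A hA t ht =>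
    (hμD (φ A) (hφm A hA) ⟨1, hφb A⟩ t ht).sub (hνD (φ A) (hφm A hA) ⟨1, hφb A⟩ t ht)
  set g : ℝ → ℝ := fun t => tvDist (μ t) (ν t) with hgdef
  have hFval : ∀ (A : Set S), MeasurableSet A → ∀ t : ℝ,
      F A t = (μ t A).toReal - (ν t A).toReal := fun A hA t => by
    rw [hFdef]; simp only
    rw [hφint (μ t) A hA, hφint (ν t) A hA]
  have hDval : ∀ (A : Set S), MeasurableSet A → ∀ t : ℝ,
      D A t = R * (((rdeT r γ κ (μ t)) A).toReal - (μ t A).toReal)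
        - R * (((rdeT r γ κ (ν t)) A).toReal - (ν t A).toReal) := fun A hA t => by
    rw [hDdef]; simp only
    rw [hφint (μ t) A hA, hφint (ν t) A hA, hφint (rdeT r γ κ (μ t)) A hA,
      hφint (rdeT r γ κ (ν t)) A hA]
  have hg0 : ∀ t : ℝ, 0 ≤ t → 0 ≤ g t := fun t ht => by
    haveI := hμP t ht; haveI := hνP t ht
    exact tv_nonneg _ _
  have hFle : ∀ (A : Set S), MeasurableSet A → ∀ t : ℝ, 0 ≤ t → |F A t| ≤ g t :=
    fun A hA t ht => by
      haveI := hμP t ht; haveI := hνP t ht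
      rw [hFval A hA t]
      exact le_tv _ _ hA
  -- crude derivative bound
  have hDbd2 : ∀ (A : Set S), MeasurableSet A → ∀ t : ℝ, 0 ≤ t → |D A t| ≤ 2 * R := by
    intro A hA t ht
    haveI := hμP t ht; haveI := hνP t ht
    rw [hDval A hA t, ← mul_sub, abs_mul, abs_of_nonneg hRpos.le]
    have b1 : ((rdeT r γ κ (μ t)) A).toReal ≤ 1 := rdeT_toReal_le_one r hr hγ hκ (μ t) hA
    have b2 : ((rdeT r γ κ (ν t)) A).toReal ≤ 1 := rdeT_toReal_le_one r hr hγ hκ (ν t) hA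
    have b3 : (μ t A).toReal ≤ 1 := by
      simpa using ENNReal.toReal_mono (by simp) (prob_le_one (μ := μ t) (s := A))
    have b4 : (ν t A).toReal ≤ 1 := by
      simpa using ENNReal.toReal_mono (by simp) (prob_le_one (μ := ν t) (s := A))
    have n1 : (0:ℝ) ≤ ((rdeT r γ κ (μ t)) A).toReal := ENNReal.toReal_nonneg
    have n2 : (0:ℝ) ≤ ((rdeT r γ κ (ν t)) A).toReal := ENNReal.toReal_nonneg
    have n3 : (0:ℝ) ≤ (μ t A).toReal := ENNReal.toReal_nonneg
    have n4 : (0:ℝ) ≤ (ν t A).toReal := ENNReal.toReal_nonneg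
    have habs : |(((rdeT r γ κ (μ t)) A).toReal - (μ t A).toReal)
        - (((rdeT r γ κ (ν t)) A).toReal - (ν t A).toReal)| ≤ 2 := by
      rw [abs_le]; constructor <;> linarith
    calc R * |(((rdeT r γ κ (μ t)) A).toReal - (μ t A).toReal)
          - (((rdeT r γ κ (ν t)) A).toReal - (ν t A).toReal)|
        ≤ R * 2 := mul_le_mul_of_nonneg_left habs hRpos.le
      _ = 2 * R := by ring
  -- sharp derivative bound
  have hDbdL : ∀ (A : Set S), MeasurableSet A → ∀ t : ℝ, 0 ≤ t → |D A t| ≤ L * g t := by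
    intro A hA t ht
    haveI := hμP t ht; haveI := hνP t ht
    rw [hDval A hA t, ← mul_sub, abs_mul, abs_of_nonneg hRpos.le]
    have h1 : |((rdeT r γ κ (μ t)) A).toReal - ((rdeT r γ κ (ν t)) A).toReal|
        ≤ R⁻¹ * (K * g t) := rdeT_lip r hr hγ hκ hmom (μ t) (ν t) hA
    have h2 : |(μ t A).toReal - (ν t A).toReal| ≤ g t := le_tv _ _ hA
    have h3 : |(((rdeT r γ κ (μ t)) A).toReal - (μ t A).toReal)
        - (((rdeT r γ κ (ν t)) A).toReal - (ν t A).toReal)|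
        ≤ R⁻¹ * (K * g t) + g t := by
      calc |(((rdeT r γ κ (μ t)) A).toReal - (μ t A).toReal)
          - (((rdeT r γ κ (ν t)) A).toReal - (ν t A).toReal)|
          = |(((rdeT r γ κ (μ t)) A).toReal - ((rdeT r γ κ (ν t)) A).toReal)
            - ((μ t A).toReal - (ν t A).toReal)| := by ring_nf
        _ ≤ |((rdeT r γ κ (μ t)) A).toReal - ((rdeT r γ κ (ν t)) A).toReal|
            + |(μ t A).toReal - (ν t A).toReal| := abs_sub _ _
        _ ≤ R⁻¹ * (K * g t) + g t := add_le_add h1 h2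
    calc R * |(((rdeT r γ κ (μ t)) A).toReal - (μ t A).toReal)
          - (((rdeT r γ κ (ν t)) A).toReal - (ν t A).toReal)|
        ≤ R * (R⁻¹ * (K * g t) + g t) := mul_le_mul_of_nonneg_left h3 hRpos.le
      _ = K * g t + R * g t := by field_simp
      _ = L * g t := by rw [hL]; ring
  -- g is Lipschitz on [0, ∞)
  have hFlip : ∀ (A : Set S), MeasurableSet A → ∀ s t : ℝ, 0 ≤ s → 0 ≤ t →
      |F A t - F A s| ≤ 2 * R * |t - s| := by
    intro A hA s t hs ht
    have := Convex.norm_image_sub_le_of_norm_hasDerivWithin_le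
      (f := F A) (f' := fun x => D A x) (s := Ici 0) (C := 2 * R)
      (fun x hx => (hFd A hA x hx).hasDerivWithinAt)
      (fun x hx => by rw [Real.norm_eq_abs]; exact hDbd2 A hA x hx)
      (convex_Ici 0) hs ht
    simpa [Real.norm_eq_abs] using this
  have hglip : ∀ s t : ℝ, 0 ≤ s → 0 ≤ t → g t ≤ g s + 2 * R * |t - s| := by
    intro s t hs ht
    refine tv_le _ _ fun A hA => ?_
    have h1 : |(μ t A).toReal - (ν t A).toReal| = |F A t| := by rw [hFval A hA t]
    rw [h1]
    calc |F A t| ≤ |F A s| + |F A t - F A s| := by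
          have := abs_add_le (F A s) (F A t - F A s)
          simpa using this
      _ ≤ g s + 2 * R * |t - s| := add_le_add (hFle A hA s hs) (hFlip A hA s t hs ht)
  set gb : ℝ → ℝ := fun t => g (max t 0) with hgbdef
  have hgb_eq : ∀ t : ℝ, 0 ≤ t → gb t = g t := fun t ht => by
    rw [hgbdef]; simp [max_eq_left ht]
  have hgb_nonneg : ∀ t : ℝ, 0 ≤ gb t := fun t => hg0 _ (le_max_right _ _)
  have hgblip : LipschitzWith (Real.toNNReal (2 * R)) gb := by
    apply LipschitzWith.of_dist_le_mul
    intro x y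
    rw [Real.dist_eq, Real.dist_eq, Real.coe_toNNReal _ (by positivity)]
    have hb : |gb x - gb y| ≤ 2 * R * |max x 0 - max y 0| := by
      rw [abs_sub_le_iff]
      constructor
      · have := hglip (max y 0) (max x 0) (le_max_right _ _) (le_max_right _ _)
        rw [hgbdef]; simp only; linarith
      · have := hglip (max x 0) (max y 0) (le_max_right _ _) (le_max_right _ _)
        rw [hgbdef]; simp only [abs_sub_comm (max x 0) (max y 0)]; linarith
    calc |gb x - gb y| ≤ 2 * R * |max x 0 - max y 0| := hb
      _ ≤ 2 * R * |x - y| := by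
          have := abs_max_sub_max_le_abs x y 0
          nlinarith [abs_nonneg (x - y)]
  have hgc : Continuous gb := hgblip.continuous
  set G : ℝ → ℝ := fun t => ∫ s in (0:ℝ)..t, gb s with hGdef
  have hG : ∀ t : ℝ, HasDerivAt G (gb t) t := fun t =>
    intervalIntegral.integral_hasDerivAt_right (hgc.intervalIntegrable _ _)
      ⟨univ, Filter.univ_mem, hgc.aestronglyMeasurable.restrict⟩ hgc.continuousAt
  have hGnn : ∀ t : ℝ, 0 ≤ t → 0 ≤ G t := fun t ht =>
    intervalIntegral.integral_nonneg ht fun x _ => hgb_nonneg x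
  -- key integral inequality
  have hkey : ∀ t : ℝ, 0 ≤ t → g t ≤ g 0 + L * G t := by
    intro t ht
    refine tv_le _ _ fun A hA => ?_
    have h1 : |(μ t A).toReal - (ν t A).toReal| = |F A t| := by rw [hFval A hA t]
    rw [h1]
    have hderiv : ∀ s ∈ Set.uIcc (0:ℝ) t, HasDerivAt (F A) (D A s) s := by
      intro s hs
      rw [Set.uIcc_of_le ht] at hs
      exact hFd A hA s hs.1
    have hDeq : ∀ s ∈ Set.Ioc (0:ℝ) t, D A s = deriv (F A) s := fun s hs =>
      ((hFd A hA s hs.1.le).deriv).symm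
    have hint : IntervalIntegrable (D A) MeasureTheory.volume 0 t := by
      rw [intervalIntegrable_iff_integrableOn_Ioc_of_le ht]
      have hmeas : AEStronglyMeasurable (D A)
          (MeasureTheory.volume.restrict (Set.Ioc (0:ℝ) t)) :=
        ((measurable_deriv (F A)).aestronglyMeasurable).congr
          ((ae_restrict_mem measurableSet_Ioc).mono fun s hs => (hDeq s hs).symm)
      refine Integrable.mono' (g := fun _ => 2 * R) ?_ hmeas ?_
      · exact integrableOn_const measure_Ioc_lt_top.ne
      · exact (ae_restrict_mem measurableSet_Ioc).mono fun s hs => by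
          rw [Real.norm_eq_abs]; exact hDbd2 A hA s hs.1.le
    have hFTC : ∫ s in (0:ℝ)..t, D A s = F A t - F A 0 :=
      intervalIntegral.integral_eq_sub_of_hasDerivAt hderiv hint
    have hb1 : |∫ s in (0:ℝ)..t, D A s| ≤ L * G t := by
      calc |∫ s in (0:ℝ)..t, D A s| ≤ ∫ s in (0:ℝ)..t, |D A s| :=
            intervalIntegral.abs_integral_le_integral_abs ht
        _ ≤ ∫ s in (0:ℝ)..t, L * gb s := by
            refine intervalIntegral.integral_mono_on ht hint.abs
              ((continuous_const.mul hgc).intervalIntegrable 0 t) fun s hs => ?_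
            rw [hgb_eq s hs.1]
            exact hDbdL A hA s hs.1
        _ = L * G t := by rw [hGdef]; exact intervalIntegral.integral_const_mul L gb
    have hsplit : F A t = F A 0 + ∫ s in (0:ℝ)..t, D A s := by rw [hFTC]; ring
    calc |F A t| = |F A 0 + ∫ s in (0:ℝ)..t, D A s| := by rw [← hsplit]
      _ ≤ |F A 0| + |∫ s in (0:ℝ)..t, D A s| := abs_add_le _ _
      _ ≤ g 0 + L * G t := add_le_add (hFle A hA 0 le_rfl) hb1
  -- Gronwall
  have main : ∀ t : ℝ, 0 ≤ t → g t ≤ Real.exp (L * t) * g 0 := by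
    intro t ht
    set u : ℝ → ℝ := fun s => g 0 + L * G s with hudef
    have hu : ∀ s : ℝ, HasDerivAt u (L * gb s) s := fun s =>
      ((hG s).const_mul L).const_add (g 0)
    have hcont : ContinuousOn u (Icc 0 t) := fun s _ =>
      ((hu s).continuousAt).continuousWithinAt
    have hG0 : G 0 = 0 := intervalIntegral.integral_same
    have hu0 : ‖u 0‖ ≤ g 0 := by
      rw [hudef]
      simp [hG0, Real.norm_eq_abs, abs_of_nonneg (hg0 0 le_rfl)]
    have husnn : ∀ s : ℝ, 0 ≤ s → g s ≤ u s := fun s hs => hkey s hs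
    have hbound : ∀ s ∈ Ico (0:ℝ) t, ‖L * gb s‖ ≤ L * ‖u s‖ + 0 := by
      intro s hs
      have h1 : 0 ≤ u s := le_trans (hg0 s hs.1) (husnn s hs.1)
      rw [Real.norm_eq_abs, Real.norm_eq_abs,
        abs_of_nonneg (mul_nonneg hL0 (hgb_nonneg s)), abs_of_nonneg h1, add_zero]
      have h2 : gb s ≤ u s := by rw [hgb_eq s hs.1]; exact husnn s hs.1
      exact mul_le_mul_of_nonneg_left h2 hL0
    have := norm_le_gronwallBound_of_norm_deriv_right_le hcont
      (fun s hs => (hu s).hasDerivWithinAt) hu0 hbound t (Set.right_mem_Icc.2 ht)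
    rw [gronwallBound_ε0] at this
    have hut : u t ≤ g 0 * Real.exp (L * (t - 0)) := le_trans (le_abs_self _) this
    calc g t ≤ u t := husnn t ht
      _ ≤ g 0 * Real.exp (L * (t - 0)) := hut
      _ = Real.exp (L * t) * g 0 := by rw [sub_zero]; ring
  refine ⟨fun t ht => main t ht, ?_⟩
  intro h0 t ht
  haveI := hμP t ht; haveI := hνP t ht
  have hz : g 0 = 0 := by
    rw [hgdef]
    simp only
    have hset : {c | ∃ A : Set S, MeasurableSet A ∧ c = |((μ 0) A).toReal - ((ν 0) A).toReal|}
        = {(0:ℝ)} := by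
      ext c
      simp only [Set.mem_setOf_eq, Set.mem_singleton_iff]
      constructor
      · rintro ⟨A, hA, rfl⟩; rw [h0]; simp
      · rintro rfl; exact ⟨∅, MeasurableSet.empty, by simp⟩
    rw [tvDist, hset, csSup_singleton]
  have hgt : g t = 0 := by
    have h1 := main t ht
    rw [hz, mul_zero] at h1
    exact le_antisymm h1 (hg0 t ht)
  apply Measure.ext
  intro A hA
  have h2 : |(μ t A).toReal - (ν t A).toReal| ≤ 0 := by
    have := le_tv (μ t) (ν t) hA
    rw [show tvDist (μ t) (ν t) = g t from rfl, hgt] at this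
    exact this
  have h3 : (μ t A).toReal = (ν t A).toReal := by
    have := abs_nonneg ((μ t A).toReal - (ν t A).toReal)
    have h4 : |(μ t A).toReal - (ν t A).toReal| = 0 := le_antisymm h2 this
    rw [abs_eq_zero, sub_eq_zero] at h4
    exact h4
  exact (ENNReal.toReal_eq_toReal_iff' (measure_ne_top _ _) (measure_ne_top _ _)).1 h3
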